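/- If H : Δ → ℝ satisfies generalized Shannon additivity with α = 2 and H does not change sign on Δ₂ (i.e., H ≥ 0 on Δ₂ or H ≤ 0 on Δ₂), then H is bounded on Δ₂; indeed |H(p,1−p) − H(1−p,p)| ≤ |4H(1/2,1/2)| for all p. -/

import Mathlib

open Real

/-- A finite stochastic vector: nonnegative entries summing to 1. -/
def IsStochastic (l : List ℝ) : Prop :=
  (∀ x ∈ l, 0 ≤ x) ∧ l.sum = 1

/-- Generalized Shannon additivity with parameter `α`: merging two adjacent
components of a stochastic vector. Powers are real powers (`rpow`). -/
def GSA (α : ℝ) (H : List ℝ → ℝ) : Prop :=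
  ∀ (l₁ l₂ : List ℝ) (a b : ℝ), IsStochastic (l₁ ++ a :: b :: l₂) → 0 < a + b →
    H (l₁ ++ a :: b :: l₂) =
      H (l₁ ++ (a + b) :: l₂) + (a + b) ^ α * H [a / (a + b), b / (a + b)]

private lemma rp2 (x : ℝ) : x ^ (2:ℝ) = x ^ 2 := by
  rw [show (2:ℝ) = ((2:ℕ):ℝ) by norm_num, Real.rpow_natCast]

private lemma H01 (H : List ℝ → ℝ) (hH : GSA 2 H) : H [0, 1] = 0 := by
  have u1 := hH [0] [] (1/2) (1/2) ⟨by intro x hx; simp only [List.mem_append, List.mem_cons, List.not_mem_nil, List.mem_singleton, or_false, false_or] at hx; rcases hx with h|h|h <;> subst h <;> norm_num, by norm_num⟩ (by norm_num)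
  have u2 := hH [] [1/2] 0 (1/2) ⟨by intro x hx; simp only [List.mem_append, List.mem_cons, List.not_mem_nil, List.mem_singleton, or_false, false_or] at hx; rcases hx with h|h|h <;> subst h <;> norm_num, by norm_num⟩ (by norm_num)
  simp only [List.cons_append, List.nil_append, rp2] at u1 u2
  norm_num at u1 u2
  linarith

private lemma H10 (H : List ℝ → ℝ) (hH : GSA 2 H) : H [1, 0] = 0 := by
  have u1 := hH [] [0] (1/2) (1/2) ⟨by intro x hx; simp only [List.mem_append, List.mem_cons, List.not_mem_nil, List.mem_singleton, or_false, false_or] at hx; rcases hx with h|h|h <;> subst h <;> norm_num, by norm_num⟩ (by norm_num)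
  have u2 := hH [1/2] [] (1/2) 0 ⟨by intro x hx; simp only [List.mem_append, List.mem_cons, List.not_mem_nil, List.mem_singleton, or_false, false_or] at hx; rcases hx with h|h|h <;> subst h <;> norm_num, by norm_num⟩ (by norm_num)
  simp only [List.cons_append, List.nil_append, rp2] at u1 u2
  norm_num at u1 u2
  linarith

private lemma key (H : List ℝ → ℝ) (hH : GSA 2 H) (p : ℝ) (hp : p ∈ Set.Icc (0:ℝ) 1) :
    H [p, 1 - p] + H [1 - p, p] = 8 * p * (1 - p) * H [1/2, 1/2] := by
  obtain ⟨hp0, hp1⟩ := hp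
  rcases eq_or_lt_of_le hp0 with h0 | h0
  · rw [← h0]; norm_num [H01 H hH, H10 H hH]
  rcases eq_or_lt_of_le hp1 with h1 | h1
  · rw [h1]; norm_num [H01 H hH, H10 H hH]
  set q := 1 - p with hq
  have hq0 : 0 < q := by simp [hq]; linarith
  have hpq : p + q = 1 := by simp [hq]
  have hpne : p ≠ 0 := ne_of_gt h0
  have hqne : q ≠ 0 := ne_of_gt hq0
  have nn : ∀ x ∈ ({p/2, q/2, 1/2, p, q} : Set ℝ), 0 ≤ x := by
    intro x hx; simp at hx; rcases hx with h|h|h|h|h <;> subst h <;> linarith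
  -- e1 : H [p/2,p/2,q/2,q/2] = H [p,q/2,q/2] + p^2 * H[1/2,1/2]
  have e1 := hH [] [q/2, q/2] (p/2) (p/2)
    ⟨by intro x hx; simp only [List.mem_append, List.mem_cons, List.not_mem_nil, List.mem_singleton, or_false, false_or] at hx; rcases hx with h|h|h|h <;> subst h <;> linarith,
     by simp; linarith⟩ (by linarith)
  rw [show p/2 + p/2 = p by ring, show (p/2)/p = 1/2 by field_simp] at e1
  simp only [List.cons_append, List.nil_append] at e1 <;> rw [rp2] at e1
  -- e2 : H [p,q/2,q/2] = H [p,q] + q^2 * H[1/2,1/2]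
  have e2 := hH [p] [] (q/2) (q/2)
    ⟨by intro x hx; simp only [List.mem_append, List.mem_cons, List.not_mem_nil, List.mem_singleton, or_false, false_or] at hx; rcases hx with h|h|h <;> subst h <;> linarith,
     by simp; linarith⟩ (by linarith)
  rw [show q/2 + q/2 = q by ring, show (q/2)/q = 1/2 by field_simp] at e2
  simp only [List.cons_append, List.nil_append] at e2 <;> rw [rp2] at e2
  -- e3 : H [p/2,p/2,q/2,q/2] = H [p/2,1/2,q/2] + (1/2)^2 * H[p,q]
  have e3 := hH [p/2] [q/2] (p/2) (q/2)
    ⟨by intro x hx; simp only [List.mem_append, List.mem_cons, List.not_mem_nil, List.mem_singleton, or_false, false_or] at hx; rcases hx with h|h|h|h <;> subst h <;> linarith,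
     by simp; linarith⟩ (by linarith)
  rw [show p/2 + q/2 = 1/2 by linarith, show (p/2)/(1/2) = p by ring,
      show (q/2)/(1/2) = q by ring] at e3
  simp only [List.cons_append, List.nil_append] at e3 <;> rw [rp2] at e3
  -- e4 : H [p/2,q/2,p/2,q/2] = H [1/2,p/2,q/2] + (1/2)^2 * H[p,q]
  have e4 := hH [] [p/2, q/2] (p/2) (q/2)
    ⟨by intro x hx; simp only [List.mem_append, List.mem_cons, List.not_mem_nil, List.mem_singleton, or_false, false_or] at hx; rcases hx with h|h|h|h <;> subst h <;> linarith,
     by simp; linarith⟩ (by linarith)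
  rw [show p/2 + q/2 = 1/2 by linarith, show (p/2)/(1/2) = p by ring,
      show (q/2)/(1/2) = q by ring] at e4
  simp only [List.cons_append, List.nil_append] at e4 <;> rw [rp2] at e4
  -- e5 : H [1/2,p/2,q/2] = H [1/2,1/2] + (1/2)^2 * H[p,q]
  have e5 := hH [1/2] [] (p/2) (q/2)
    ⟨by intro x hx; simp only [List.mem_append, List.mem_cons, List.not_mem_nil, List.mem_singleton, or_false, false_or] at hx; rcases hx with h|h|h <;> subst h <;> linarith,
     by simp; linarith⟩ (by linarith)
  rw [show p/2 + q/2 = 1/2 by linarith, show (p/2)/(1/2) = p by ring,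
      show (q/2)/(1/2) = q by ring] at e5
  simp only [List.cons_append, List.nil_append] at e5 <;> rw [rp2] at e5
  -- e6 : H [p/2,q/2,p/2,q/2] = H [p/2,1/2,q/2] + (1/2)^2 * H[q,p]
  have e6 := hH [p/2] [q/2] (q/2) (p/2)
    ⟨by intro x hx; simp only [List.mem_append, List.mem_cons, List.not_mem_nil, List.mem_singleton, or_false, false_or] at hx; rcases hx with h|h|h|h <;> subst h <;> linarith,
     by simp; linarith⟩ (by linarith)
  rw [show q/2 + p/2 = 1/2 by linarith, show (p/2)/(1/2) = p by ring,
      show (q/2)/(1/2) = q by ring] at e6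
  simp only [List.cons_append, List.nil_append] at e6 <;> rw [rp2] at e6
  have hq' : q = 1 - p := hq
  linear_combination (-4) * e1 + (-4) * e2 + 4 * e3 + 4 * e4 + 4 * e5 + (-4) * e6
    + (H [1/2,1/2]) * (8 - 4*p - 4*q) * hq'

theorem stmt_12 (H : List ℝ → ℝ) (hH : GSA 2 H)
    (hsign : (∀ p ∈ Set.Icc (0 : ℝ) 1, 0 ≤ H [p, 1 - p]) ∨
             (∀ p ∈ Set.Icc (0 : ℝ) 1, H [p, 1 - p] ≤ 0)) :
    (∃ M : ℝ, ∀ p ∈ Set.Icc (0 : ℝ) 1, |H [p, 1 - p]| ≤ M) ∧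
    ∀ p ∈ Set.Icc (0 : ℝ) 1,
      |H [p, 1 - p] - H [1 - p, p]| ≤ |4 * H [1/2, 1/2]| := by
  have main : ∀ p ∈ Set.Icc (0:ℝ) 1,
      |H [p, 1 - p]| ≤ |4 * H [1/2, 1/2]| ∧
      |H [p, 1 - p] - H [1 - p, p]| ≤ |4 * H [1/2, 1/2]| := by
    intro p hp
    have hp' : (1 - p) ∈ Set.Icc (0:ℝ) 1 := ⟨by linarith [hp.2], by linarith [hp.1]⟩
    have k := key H hH p hp
    set f := H [p, 1 - p]
    set g := H [1 - p, p]
    set h2 := H [1/2, 1/2]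
    have habs : |f + g| ≤ |4 * h2| := by
      rw [k, show (8:ℝ) * p * (1 - p) * h2 = (8 * (p * (1-p))) * h2 by ring, abs_mul,
          abs_of_nonneg (show (0:ℝ) ≤ 8 * (p * (1-p)) by nlinarith [hp.1, hp.2]),
          abs_mul, show |(4:ℝ)| = 4 by norm_num]
      nlinarith [abs_nonneg h2, sq_nonneg (p - 1/2)]
    have hg : g = H [1 - p, 1 - (1 - p)] := by norm_num; rfl
    rcases hsign with hs | hs
    · have h1 : 0 ≤ f := hs p hp
      have h2' : 0 ≤ g := by rw [hg]; exact hs (1 - p) hp'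
      constructor
      · rw [abs_of_nonneg h1]
        calc f ≤ f + g := by linarith
          _ ≤ |f + g| := le_abs_self _
          _ ≤ _ := habs
      · have : |f - g| ≤ f + g := abs_le.2 ⟨by linarith, by linarith⟩
        calc |f - g| ≤ f + g := this
          _ ≤ |f + g| := le_abs_self _
          _ ≤ _ := habs
    · have h1 : f ≤ 0 := hs p hp
      have h2' : g ≤ 0 := by rw [hg]; exact hs (1 - p) hp'
      constructor
      · rw [abs_of_nonpos h1]
        calc -f ≤ -(f + g) := by linarith
          _ ≤ |f + g| := neg_le_abs _
          _ ≤ _ := habs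
      · have : |f - g| ≤ -(f + g) := abs_le.2 ⟨by linarith, by linarith⟩
        calc |f - g| ≤ -(f + g) := this
          _ ≤ |f + g| := neg_le_abs _
          _ ≤ _ := habs
  exact ⟨⟨|4 * H [1/2, 1/2]|, fun p hp => (main p hp).1⟩, fun p hp => (main p hp).2⟩
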